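/- In the single-qubit model with state ρ = Diag(1−λ₂, λ₂), 0 < λ₂ ≤ 1/2, the Fisher information matrix of the measurement setting s = (θ, φ) in the parameters (λ₂, Re ρ₁₂, Im ρ₁₂), evaluated at ρ, equals I(ρ|s) = (2/(1 − cos²θ·(1−2λ₂)²)) · M(θ,φ), where M(θ,φ) is the 3×3 matrix with rows [2cos²θ, −cos φ·sin 2θ, sin φ·sin 2θ], [−cos φ·sin 2θ, 2cos²φ·sin²θ, −sin 2φ·sin²θ], [sin φ·sin 2θ, −sin 2φ·sin²θ, 2sin²φ·sin²θ]. -/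

import Mathlib

open Matrix MeasureTheory
noncomputable section

/-- The qubit state with eigenvalue parameter `l = λ₂` and off-diagonal entry
`ρ₁₂ = x + i·y` (so `x = Re ρ₁₂`, `y = Im ρ₁₂`). -/
def qubitState (l x y : ℝ) : Matrix (Fin 2) (Fin 2) ℂ :=
  !![((1 - l : ℝ) : ℂ), (x : ℂ) + (y : ℂ) * Complex.I;
     (x : ℂ) - (y : ℂ) * Complex.I, ((l : ℝ) : ℂ)]

/-- Outcome vectors of the setting `s = (θ, φ)`: `|e⁺⟩ = cos(θ/2)|0⟩ + e^{iφ} sin(θ/2)|1⟩`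
(for `o = true`) and its orthogonal complement (for `o = false`). -/
def outcomeVec (θ φ : ℝ) : Bool → Fin 2 → ℂ
  | true => ![((Real.cos (θ / 2) : ℝ) : ℂ),
      Complex.exp ((φ : ℂ) * Complex.I) * ((Real.sin (θ / 2) : ℝ) : ℂ)]
  | false => ![((Real.sin (θ / 2) : ℝ) : ℂ),
      -(Complex.exp ((φ : ℂ) * Complex.I)) * ((Real.cos (θ / 2) : ℝ) : ℂ)]

/-- Outcome probability `p(o|s) = ⟨e^o_s, ρ(l,x,y) e^o_s⟩`. -/
def outcomeProb (l x y θ φ : ℝ) (o : Bool) : ℝ :=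
  (star (outcomeVec θ φ o) ⬝ᵥ (qubitState l x y) *ᵥ (outcomeVec θ φ o)).re

/-- The gradient `(∂_{λ₂} p, ∂_x p, ∂_y p)` of the outcome probability with respect to the
parameters `(λ₂, Re ρ₁₂, Im ρ₁₂)`, evaluated at `x = y = 0`. -/
def probGrad (l θ φ : ℝ) (o : Bool) : Fin 3 → ℝ :=
  ![deriv (fun t => outcomeProb t 0 0 θ φ o) l,
    deriv (fun t => outcomeProb l t 0 θ φ o) 0,
    deriv (fun t => outcomeProb l 0 t θ φ o) 0]

/-- The 3×3 classical Fisher information matrix of the setting `s = (θ, φ)` at the state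
`ρ = Diag(1−λ₂, λ₂)`, in the parameters `(λ₂, Re ρ₁₂, Im ρ₁₂)`. -/
def qubitFisher (l θ φ : ℝ) : Matrix (Fin 3) (Fin 3) ℝ :=
  Matrix.of fun a b =>
    ∑ o : Bool, probGrad l θ φ o a * probGrad l θ φ o b / outcomeProb l 0 0 θ φ o

/-- The uniform probability measure `(1/4π)·sin θ dθ dφ` on settings
`(θ, φ) ∈ [0,π] × [0,2π]`. -/
def settingMeasure : Measure (ℝ × ℝ) :=
  (volume.restrict (Set.Icc (0 : ℝ) Real.pi ×ˢ Set.Icc (0 : ℝ) (2 * Real.pi))).withDensity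
    fun s => ENNReal.ofReal (Real.sin s.1 / (4 * Real.pi))

/-- The mean Fisher information matrix `Ī(ρ)` over uniformly random settings. -/
def meanQubitFisher (l : ℝ) : Matrix (Fin 3) (Fin 3) ℝ :=
  Matrix.of fun a b => ∫ s : ℝ × ℝ, qubitFisher l s.1 s.2 a b ∂settingMeasure

end

lemma outcomeProb_true (l x y θ φ : ℝ) : outcomeProb l x y θ φ true =
    (1-l)*Real.cos (θ/2)^2 + l*Real.sin (θ/2)^2
    + 2*x*Real.cos (θ/2)*Real.sin (θ/2)*Real.cos φ
    - 2*y*Real.cos (θ/2)*Real.sin (θ/2)*Real.sin φ := by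
  simp only [outcomeProb, outcomeVec, qubitState, Matrix.mulVec, dotProduct,
    Fin.sum_univ_two, Complex.exp_mul_I, ← Complex.ofReal_cos, ← Complex.ofReal_sin,
    Matrix.cons_val', Matrix.cons_val_zero, Matrix.cons_val_one, Matrix.head_cons,
    Matrix.empty_val', Matrix.cons_val_fin_one, Matrix.head_fin_const,
    Pi.star_apply, Matrix.of_apply, RCLike.star_def,
    Complex.add_re, Complex.mul_re, Complex.mul_im, Complex.add_im, Complex.sub_re,
    Complex.sub_im, Complex.I_re, Complex.I_im, Complex.ofReal_re, Complex.ofReal_im,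
    Complex.conj_re, Complex.conj_im, Complex.neg_re, Complex.neg_im]
  linear_combination (l * Real.sin (θ/2)^2) * (Real.sin_sq_add_cos_sq φ)

lemma outcomeProb_false (l x y θ φ : ℝ) : outcomeProb l x y θ φ false =
    (1-l)*Real.sin (θ/2)^2 + l*Real.cos (θ/2)^2
    - 2*x*Real.cos (θ/2)*Real.sin (θ/2)*Real.cos φ
    + 2*y*Real.cos (θ/2)*Real.sin (θ/2)*Real.sin φ := by
  simp only [outcomeProb, outcomeVec, qubitState, Matrix.mulVec, dotProduct,
    Fin.sum_univ_two, Complex.exp_mul_I, ← Complex.ofReal_cos, ← Complex.ofReal_sin,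
    Matrix.cons_val', Matrix.cons_val_zero, Matrix.cons_val_one, Matrix.head_cons,
    Matrix.empty_val', Matrix.cons_val_fin_one, Matrix.head_fin_const,
    Pi.star_apply, Matrix.of_apply, RCLike.star_def,
    Complex.add_re, Complex.mul_re, Complex.mul_im, Complex.add_im, Complex.sub_re,
    Complex.sub_im, Complex.I_re, Complex.I_im, Complex.ofReal_re, Complex.ofReal_im,
    Complex.conj_re, Complex.conj_im, Complex.neg_re, Complex.neg_im]
  linear_combination (l * Real.cos (θ/2)^2) * (Real.sin_sq_add_cos_sq φ)

lemma deriv_affine (a b x : ℝ) : deriv (fun t => a + t * b) x = b := by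
  simpa using (((hasDerivAt_id x).mul_const b).const_add a).deriv

lemma fisher_entry (P Q u v : ℝ) (hP : P ≠ 0) (hQ : Q ≠ 0) (hPQ : P + Q = 1) :
    u * v / P + -u * -v / Q = 2 / (4 * (P * Q)) * (2 * (u * v)) := by
  field_simp
  linear_combination (4 * u * v) * hPQ


/-- the Fisher information matrix of the setting `s = (θ, φ)` at
`ρ = Diag(1−λ₂, λ₂)` equals `(2/(1 − cos²θ·(1−2λ₂)²)) · M(θ,φ)`. -/
theorem qubitFisher_eq (l θ φ : ℝ) (hl : 0 < l) (hl2 : l ≤ 1 / 2)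
    (hθ : θ ∈ Set.Icc 0 Real.pi) (hφ : φ ∈ Set.Icc 0 (2 * Real.pi)) :
    qubitFisher l θ φ =
      (2 / (1 - Real.cos θ ^ 2 * (1 - 2 * l) ^ 2)) •
        !![2 * Real.cos θ ^ 2, -Real.cos φ * Real.sin (2 * θ), Real.sin φ * Real.sin (2 * θ);
           -Real.cos φ * Real.sin (2 * θ), 2 * Real.cos φ ^ 2 * Real.sin θ ^ 2,
             -Real.sin (2 * φ) * Real.sin θ ^ 2;
           Real.sin φ * Real.sin (2 * θ), -Real.sin (2 * φ) * Real.sin θ ^ 2,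
             2 * Real.sin φ ^ 2 * Real.sin θ ^ 2] := by
  set c := Real.cos (θ/2) with hc
  set s := Real.sin (θ/2) with hs
  have pyth : s ^ 2 + c ^ 2 = 1 := Real.sin_sq_add_cos_sq _
  set P := (1-l)*c^2 + l*s^2 with hPdef
  set Q := (1-l)*s^2 + l*c^2 with hQdef
  have hP : P ≠ 0 := by nlinarith [sq_nonneg c, sq_nonneg s]
  have hQ : Q ≠ 0 := by nlinarith [sq_nonneg c, sq_nonneg s]
  have hPQ : P + Q = 1 := by rw [hPdef, hQdef]; linear_combination pyth
  have hcos : Real.cos θ = c^2 - s^2 := by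
    rw [show θ = 2 * (θ/2) by ring, Real.cos_two_mul]
    linear_combination pyth
  have hsin : Real.sin θ = 2 * s * c := by
    rw [hc, hs, show θ = 2 * (θ/2) by ring, Real.sin_two_mul]
    ring
  have hD : 1 - Real.cos θ ^ 2 * (1 - 2 * l) ^ 2 = 4 * (P * Q) := by
    rw [hcos, hPdef, hQdef]
    linear_combination (-(1 + s^2 + c^2)) * pyth
  -- derivatives
  have d0t : deriv (fun t => outcomeProb t 0 0 θ φ true) l = s^2 - c^2 := by
    have : (fun t => outcomeProb t 0 0 θ φ true) = fun t => c^2 + t * (s^2 - c^2) := by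
      funext t; rw [outcomeProb_true]; ring
    rw [this, deriv_affine]
  have d1t : deriv (fun t => outcomeProb l t 0 θ φ true) 0 = 2*c*s*Real.cos φ := by
    have : (fun t => outcomeProb l t 0 θ φ true)
        = fun t => ((1-l)*c^2 + l*s^2) + t * (2*c*s*Real.cos φ) := by
      funext t; rw [outcomeProb_true]; ring
    rw [this, deriv_affine]
  have d2t : deriv (fun t => outcomeProb l 0 t θ φ true) 0 = -(2*c*s*Real.sin φ) := by
    have : (fun t => outcomeProb l 0 t θ φ true)
        = fun t => ((1-l)*c^2 + l*s^2) + t * -(2*c*s*Real.sin φ) := by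
      funext t; rw [outcomeProb_true]; ring
    rw [this, deriv_affine]
  have d0f : deriv (fun t => outcomeProb t 0 0 θ φ false) l = -(s^2 - c^2) := by
    have : (fun t => outcomeProb t 0 0 θ φ false) = fun t => s^2 + t * -(s^2 - c^2) := by
      funext t; rw [outcomeProb_false]; ring
    rw [this, deriv_affine]
  have d1f : deriv (fun t => outcomeProb l t 0 θ φ false) 0 = -(2*c*s*Real.cos φ) := by
    have : (fun t => outcomeProb l t 0 θ φ false)
        = fun t => ((1-l)*s^2 + l*c^2) + t * -(2*c*s*Real.cos φ) := by
      funext t; rw [outcomeProb_false]; ring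
    rw [this, deriv_affine]
  have d2f : deriv (fun t => outcomeProb l 0 t θ φ false) 0 = -(-(2*c*s*Real.sin φ)) := by
    have : (fun t => outcomeProb l 0 t θ φ false)
        = fun t => ((1-l)*s^2 + l*c^2) + t * -(-(2*c*s*Real.sin φ)) := by
      funext t; rw [outcomeProb_false]; ring
    rw [this, deriv_affine]
  have hpt : outcomeProb l 0 0 θ φ true = P := by rw [outcomeProb_true]; ring
  have hpf : outcomeProb l 0 0 θ φ false = Q := by rw [outcomeProb_false]; ring
  ext a b
  have h2 : (⟨2, by omega⟩ : Fin 3) = 2 := rfl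
  fin_cases a <;> fin_cases b
  all_goals
    simp only [h2, qubitFisher, Matrix.of_apply, Fintype.sum_bool, probGrad,
      Matrix.cons_val_zero, Matrix.cons_val_one, Matrix.head_cons, Matrix.cons_val_two,
      Matrix.tail_cons, Matrix.smul_apply, smul_eq_mul, Fin.isValue, Fin.mk_zero,
      Fin.mk_one, Matrix.cons_val', Matrix.empty_val', Matrix.cons_val_fin_one,
      Matrix.head_fin_const]
    simp only [d0t, d1t, d2t, d0f, d1f, d2f, hpt, hpf, hD]
    rw [fisher_entry P Q _ _ hP hQ hPQ]
    simp only [Real.sin_two_mul, hcos, hsin]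
    ring
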